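/- If k_N/N → q with 0 < q < p < 1, then -(1/N) log B(p, k_N, N) → D(q‖p) as N → ∞, where B(p,k,N) = Σ_{m=0}^{k} C(N,m) p^m (1-p)^{N-m}. -/

import Mathlib

open Filter Topology

/-- Lower tail of a Binomial(N, p) distribution: `B(p,k,N) = Σ_{m=0}^k C(N,m) p^m (1-p)^{N-m}`. -/
noncomputable def binTail (p : ℝ) (k N : ℕ) : ℝ :=
  ∑ m ∈ Finset.range (k + 1), (N.choose m : ℝ) * p ^ m * (1 - p) ^ (N - m)

/-- Binary relative entropy (natural log): `D(q‖p) = q log(q/p) + (1-q) log((1-q)/(1-p))`. -/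
noncomputable def relent (q p : ℝ) : ℝ :=
  q * Real.log (q / p) + (1 - q) * Real.log ((1 - q) / (1 - p))

noncomputable def bt (p : ℝ) (N m : ℕ) : ℝ := (N.choose m : ℝ) * p ^ m * (1 - p) ^ (N - m)

lemma bt_nonneg {p : ℝ} (h0 : 0 ≤ p) (h1 : p ≤ 1) (N m : ℕ) : 0 ≤ bt p N m := by
  unfold bt
  have : (0:ℝ) ≤ 1 - p := by linarith
  positivity

lemma bt_mul (p : ℝ) {N m : ℕ} (h : m < N) :
    bt p N (m+1) * (((m:ℝ)+1) * (1-p)) = bt p N m * (((N:ℝ) - m) * p) := by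
  have hc : (N.choose (m+1) : ℝ) * ((m:ℝ)+1) = (N.choose m : ℝ) * ((N:ℝ) - m) := by
    have h2 := Nat.choose_succ_right_eq N m
    have h3 : ((N.choose (m+1) * (m+1) : ℕ) : ℝ) = ((N.choose m * (N - m) : ℕ) : ℝ) := by
      exact_mod_cast congrArg (Nat.cast : ℕ → ℝ) h2
    push_cast [Nat.cast_sub h.le] at h3
    linarith
  have hpow : (1-p)^(N-(m+1)) * (1-p) = (1-p)^(N-m) := by
    rw [← pow_succ]; congr 1; omega
  calc bt p N (m+1) * (((m:ℝ)+1) * (1-p))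
      = ((N.choose (m+1) : ℝ) * ((m:ℝ)+1)) * p^(m+1) * ((1-p)^(N-(m+1)) * (1-p)) := by
        unfold bt; ring
    _ = ((N.choose m : ℝ) * ((N:ℝ) - m)) * (p^m * p) * (1-p)^(N-m) := by
        rw [hc, hpow, pow_succ]
    _ = bt p N m * (((N:ℝ) - m) * p) := by unfold bt; ring

lemma bt_step_up {p : ℝ} (hp0 : 0 < p) (hp1 : p < 1) {N m : ℕ}
    (h : (m:ℝ)+1 ≤ ((N:ℝ)+1)*p) : bt p N m ≤ bt p N (m+1) := by
  have hN0 : (0:ℝ) ≤ (N:ℝ) := Nat.cast_nonneg N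
  have hmN : m < N := by
    have : (m:ℝ)+1 < (N:ℝ)+1 := lt_of_le_of_lt h (by nlinarith)
    exact_mod_cast (by linarith : (m:ℝ) < (N:ℝ))
  have key := bt_mul p hmN
  have hpos : 0 < ((m:ℝ)+1) * (1-p) := by
    apply mul_pos (by positivity) (by linarith)
  have hle : ((m:ℝ)+1)*(1-p) ≤ ((N:ℝ)-m)*p := by nlinarith
  have hb := bt_nonneg hp0.le hp1.le N m
  have h2 : bt p N m * (((m:ℝ)+1)*(1-p)) ≤ bt p N (m+1) * (((m:ℝ)+1)*(1-p)) := by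
    rw [key]; exact mul_le_mul_of_nonneg_left hle hb
  exact le_of_mul_le_mul_right h2 hpos

lemma bt_step_down {p : ℝ} (hp0 : 0 < p) (hp1 : p < 1) {N m : ℕ}
    (h : ((N:ℝ)+1)*p ≤ (m:ℝ)+1) : bt p N (m+1) ≤ bt p N m := by
  rcases lt_or_ge m N with hmN | hNm
  · have key := bt_mul p hmN
    have hb := bt_nonneg hp0.le hp1.le N m
    have hmN' : (m:ℝ) < N := by exact_mod_cast hmN
    have hle : ((N:ℝ)-m)*p ≤ ((m:ℝ)+1)*(1-p) := by nlinarith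
    have hpos : 0 < ((m:ℝ)+1) * (1-p) := by
      apply mul_pos (by positivity) (by linarith)
    have h2 : bt p N (m+1) * (((m:ℝ)+1)*(1-p)) ≤ bt p N m * (((m:ℝ)+1)*(1-p)) := by
      rw [key]; exact mul_le_mul_of_nonneg_left hle hb
    exact le_of_mul_le_mul_right h2 hpos
  · have hz : N.choose (m+1) = 0 := Nat.choose_eq_zero_of_lt (by omega)
    have h1 : bt p N (m+1) = 0 := by simp [bt, hz]
    rw [h1]; exact bt_nonneg hp0.le hp1.le N m

lemma bt_le_of_le {p : ℝ} (hp0 : 0 < p) (hp1 : p < 1) {N : ℕ} :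
    ∀ k : ℕ, (k:ℝ) ≤ ((N:ℝ)+1)*p → ∀ m ≤ k, bt p N m ≤ bt p N k := by
  intro k
  induction k with
  | zero => intro _ m hm; simp [Nat.le_zero.mp hm]
  | succ k ih =>
    intro hk m hm
    rcases Nat.eq_or_lt_of_le hm with h | h
    · rw [h]
    · have hm' : m ≤ k := by omega
      have hkk : ((k:ℕ):ℝ) + 1 ≤ ((N:ℝ)+1)*p := by push_cast at hk ⊢; linarith
      have hk' : (k:ℝ) ≤ ((N:ℝ)+1)*p := by linarith
      exact le_trans (ih hk' m hm') (bt_step_up hp0 hp1 hkk)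

lemma bt_le_of_ge {p : ℝ} (hp0 : 0 < p) (hp1 : p < 1) {N k : ℕ}
    (hk : ((N:ℝ)+1)*p ≤ (k:ℝ)+1) : ∀ m, k ≤ m → bt p N m ≤ bt p N k := by
  intro m hm
  induction m, hm using Nat.le_induction with
  | base => exact le_rfl
  | succ n hn ih =>
    refine le_trans (bt_step_down hp0 hp1 ?_) ih
    have : (k:ℝ) ≤ n := by exact_mod_cast hn
    linarith


lemma bt_max {N k : ℕ} (hk1 : 1 ≤ k) (hkN : k < N) (m : ℕ) :
    bt ((k:ℝ)/N) N m ≤ bt ((k:ℝ)/N) N k := by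
  have hN : (0:ℝ) < N := by
    have : 0 < N := by omega
    exact_mod_cast this
  have hk' : (0:ℝ) < k := by exact_mod_cast hk1
  have hkN' : (k:ℝ) < N := by exact_mod_cast hkN
  have hp0 : 0 < (k:ℝ)/N := by positivity
  have hp1 : (k:ℝ)/N < 1 := (div_lt_one hN).mpr hkN'
  rcases le_total m k with h | h
  · refine bt_le_of_le hp0 hp1 k ?_ m h
    rw [show ((N:ℝ)+1) * ((k:ℝ)/N) = (((N:ℝ)+1)*k)/N by ring, le_div_iff₀ hN]; nlinarith
  · refine bt_le_of_ge hp0 hp1 ?_ m h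
    rw [show ((N:ℝ)+1) * ((k:ℝ)/N) = (((N:ℝ)+1)*k)/N by ring, div_le_iff₀ hN]; nlinarith

lemma bt_sum (p : ℝ) (N : ℕ) : ∑ m ∈ Finset.range (N+1), bt p N m = 1 := by
  have hpq : p + (1-p) = 1 := by ring
  have h := (add_pow p (1-p) N).symm
  rw [hpq, one_pow] at h
  calc ∑ m ∈ Finset.range (N+1), bt p N m
      = ∑ m ∈ Finset.range (N+1), p ^ m * (1-p) ^ (N - m) * (N.choose m : ℝ) :=
        Finset.sum_congr rfl (fun m _ => by unfold bt; ring)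
    _ = 1 := h

lemma bt_self_lb {N k : ℕ} (hk1 : 1 ≤ k) (hkN : k < N) :
    ((N:ℝ)+1)⁻¹ ≤ bt ((k:ℝ)/N) N k := by
  have hN : (0:ℝ) < N := by
    have : 0 < N := by omega
    exact_mod_cast this
  have h1 : (1:ℝ) ≤ ((N:ℝ)+1) * bt ((k:ℝ)/N) N k := by
    have := bt_sum ((k:ℝ)/N) N
    have h2 : ∑ m ∈ Finset.range (N+1), bt ((k:ℝ)/N) N m
        ≤ ∑ _m ∈ Finset.range (N+1), bt ((k:ℝ)/N) N k :=
      Finset.sum_le_sum (fun m _ => bt_max hk1 hkN m)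
    rw [Finset.sum_const, Finset.card_range] at h2
    rw [this] at h2
    calc (1:ℝ) ≤ (N+1) • bt ((k:ℝ)/N) N k := h2
      _ = ((N:ℝ)+1) * bt ((k:ℝ)/N) N k := by push_cast [nsmul_eq_mul]; ring
  rw [inv_eq_one_div, div_le_iff₀ (by positivity)]
  linarith

lemma bt_self_ub {N k : ℕ} (hk1 : 1 ≤ k) (hkN : k < N) :
    bt ((k:ℝ)/N) N k ≤ 1 := by
  have hN : (0:ℝ) < N := by
    have : 0 < N := by omega
    exact_mod_cast this
  have hk' : (0:ℝ) < k := by exact_mod_cast hk1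
  have hkN' : (k:ℝ) < N := by exact_mod_cast hkN
  have hp0 : (0:ℝ) ≤ (k:ℝ)/N := by positivity
  have hp1 : (k:ℝ)/N ≤ 1 := by rw [div_le_one hN]; linarith
  rw [← bt_sum ((k:ℝ)/N) N]
  exact Finset.single_le_sum (fun m _ => bt_nonneg hp0 hp1 N m)
    (Finset.mem_range.mpr (by omega))

lemma main_bounds {p : ℝ} {N k : ℕ} (hp0 : 0 < p) (hp1 : p < 1)
    (hk1 : 1 ≤ k) (hkN : k < N) (hkp : (k:ℝ) ≤ ((N:ℝ)+1)*p) :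
    |(-(1/(N:ℝ)) * Real.log (binTail p k N))
      - ((k:ℝ)/N * Real.log (((k:ℝ)/N)/p) + (1-(k:ℝ)/N) * Real.log ((1-(k:ℝ)/N)/(1-p)))|
      ≤ Real.log ((N:ℝ)+1) / N := by
  have hN : (0:ℝ) < N := by
    have : 0 < N := by omega
    exact_mod_cast this
  have hk' : (0:ℝ) < k := by exact_mod_cast hk1
  have hkN' : (k:ℝ) < N := by exact_mod_cast hkN
  have hp1' : (0:ℝ) < 1 - p := by linarith
  set n : ℝ := (N:ℝ) with hn
  set x : ℝ := (k:ℝ) with hx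
  have hc : (0:ℝ) < (N.choose k : ℝ) := by exact_mod_cast Nat.choose_pos hkN.le
  set A : ℝ := Real.log (N.choose k : ℝ) with hA
  set a : ℝ := Real.log (x/n) with ha
  set b : ℝ := Real.log (1 - x/n) with hb
  set c : ℝ := Real.log p with hcdef
  set d : ℝ := Real.log (1-p) with hd
  have hNk : ((N - k : ℕ) : ℝ) = n - x := by
    push_cast [Nat.cast_sub hkN.le]; ring
  have hq0 : (0:ℝ) < x/n := by positivity
  have hq1 : x/n < 1 := (div_lt_one hN).mpr hkN'
  have hq1' : (0:ℝ) < 1 - x/n := by linarith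
  -- log of bt p N k
  have hT : (0:ℝ) < bt p N k := by
    unfold bt
    exact mul_pos (mul_pos hc (pow_pos hp0 k)) (pow_pos hp1' _)
  have hlogT : Real.log (bt p N k) = A + x * c + (n - x) * d := by
    unfold bt
    have e1 : (N.choose k : ℝ) ≠ 0 := ne_of_gt hc
    have e2 : p^k ≠ 0 := ne_of_gt (pow_pos hp0 k)
    have e3 : (1-p)^(N-k) ≠ 0 := ne_of_gt (pow_pos hp1' _)
    rw [Real.log_mul (mul_ne_zero e1 e2) e3, Real.log_mul e1 e2,
      Real.log_pow, Real.log_pow, hNk]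
  -- log of bt (x/n) N k
  have hlogS : Real.log (bt (x/n) N k) = A + x * a + (n - x) * b := by
    unfold bt
    have e1 : (N.choose k : ℝ) ≠ 0 := ne_of_gt hc
    have e2 : (x/n)^k ≠ 0 := ne_of_gt (pow_pos hq0 k)
    have e3 : (1-x/n)^(N-k) ≠ 0 := ne_of_gt (pow_pos hq1' _)
    rw [Real.log_mul (mul_ne_zero e1 e2) e3, Real.log_mul e1 e2,
      Real.log_pow, Real.log_pow, hNk]
  set S : ℝ := A + x * a + (n - x) * b with hS
  have hSub : S ≤ 0 := by
    rw [← hlogS]; exact Real.log_nonpos (bt_nonneg hq0.le hq1.le N k) (bt_self_ub hk1 hkN)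
  have hSlb : -Real.log (n+1) ≤ S := by
    rw [← hlogS, ← Real.log_inv]
    exact Real.log_le_log (by positivity) (bt_self_lb hk1 hkN)
  -- binTail bounds
  have hbt_eq : binTail p k N = ∑ m ∈ Finset.range (k+1), bt p N m := rfl
  have hlow : bt p N k ≤ binTail p k N := by
    rw [hbt_eq]
    exact Finset.single_le_sum (fun m _ => bt_nonneg hp0.le hp1.le N m)
      (Finset.mem_range.mpr (by omega))
  have hup : binTail p k N ≤ (x+1) * bt p N k := by
    rw [hbt_eq]
    calc ∑ m ∈ Finset.range (k+1), bt p N m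
        ≤ ∑ _m ∈ Finset.range (k+1), bt p N k :=
          Finset.sum_le_sum (fun m hm =>
            bt_le_of_le hp0 hp1 k hkp m (Finset.mem_range_succ_iff.mp hm))
      _ = (x+1) * bt p N k := by
          rw [Finset.sum_const, Finset.card_range, nsmul_eq_mul, hx]; push_cast; ring
  have hBpos : (0:ℝ) < binTail p k N := lt_of_lt_of_le hT hlow
  set L : ℝ := Real.log (binTail p k N) with hL
  have hLub : L ≤ Real.log (n+1) + (A + x * c + (n - x) * d) := by
    calc L ≤ Real.log ((x+1) * bt p N k) := Real.log_le_log hBpos hup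
      _ = Real.log (x+1) + Real.log (bt p N k) :=
          Real.log_mul (by positivity) (ne_of_gt hT)
      _ ≤ Real.log (n+1) + (A + x * c + (n - x) * d) := by
          rw [hlogT]
          have : Real.log (x+1) ≤ Real.log (n+1) :=
            Real.log_le_log (by positivity) (by linarith)
          linarith
  have hLlb : A + x * c + (n - x) * d ≤ L := by
    rw [← hlogT]; exact Real.log_le_log hT hlow
  -- relate F
  have hdiv1 : Real.log ((x/n)/p) = a - c := Real.log_div (ne_of_gt hq0) (ne_of_gt hp0)
  have hdiv2 : Real.log ((1 - x/n)/(1-p)) = b - d := Real.log_div (ne_of_gt hq1') (ne_of_gt hp1')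
  rw [hdiv1, hdiv2]
  set F : ℝ := x/n * (a - c) + (1 - x/n) * (b - d) with hF
  have hnF : n * F = x*a + (n-x)*b - x*c - (n-x)*d := by
    rw [hF]; field_simp; ring
  -- assemble
  have key1 : L ≤ -(n*F) + Real.log (n+1) := by
    have : A + x*c + (n-x)*d = S - n*F := by rw [hnF, hS]; ring
    rw [this] at hLub; linarith
  have key2 : -(n*F) - Real.log (n+1) ≤ L := by
    have : A + x*c + (n-x)*d = S - n*F := by rw [hnF, hS]; ring
    rw [this] at hLlb; linarith
  rw [abs_le]
  constructor
  · have heq : -(1/n)*L - F = (-L - n*F)/n := by field_simp; try ring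
    have h2 : -(Real.log (n+1)/n) = (-Real.log (n+1))/n := by ring
    rw [heq, h2]
    gcongr
    linarith
  · have heq : -(1/n)*L - F = (-L - n*F)/n := by field_simp; try ring
    rw [heq]
    gcongr
    linarith

lemma log_ratio_tendsto : Tendsto (fun N : ℕ => Real.log ((N:ℝ)+1) / N) atTop (nhds 0) := by
  have h0 : Tendsto (fun x : ℝ => Real.log x / x) atTop (nhds 0) :=
    Real.isLittleO_log_id_atTop.tendsto_div_nhds_zero
  have h1 : Tendsto (fun N : ℕ => ((N:ℝ)+1)) atTop atTop :=
    tendsto_atTop_add_const_right _ 1 tendsto_natCast_atTop_atTop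
  have h2 : Tendsto (fun N : ℕ => Real.log ((N:ℝ)+1) / ((N:ℝ)+1)) atTop (nhds 0) :=
    h0.comp h1
  have h3 : Tendsto (fun N : ℕ => ((N:ℝ)+1) / N) atTop (nhds 1) := by
    have h4 : Tendsto (fun N : ℕ => 1 + 1/(N:ℝ)) atTop (nhds (1 + 0)) :=
      tendsto_const_nhds.add (tendsto_one_div_atTop_nhds_zero_nat)
    rw [add_zero] at h4
    apply h4.congr'
    filter_upwards [eventually_ge_atTop 1] with N hN
    have hN' : (N:ℝ) ≠ 0 := by positivity
    field_simp
  have h5 := h2.mul h3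
  rw [zero_mul] at h5
  apply h5.congr'
  filter_upwards [eventually_ge_atTop 1] with N hN
  have hN' : (N:ℝ) ≠ 0 := by
    have : (0:ℕ) < N := hN
    positivity
  field_simp


/-- Asymptotics of the binomial lower tail: if `k_N/N → q` with `0 < q < p < 1`, then
`-(1/N) log B(p, k_N, N) → D(q‖p)` as `N → ∞`. -/
theorem binTail_log_asymptotics (p q : ℝ) (k : ℕ → ℕ)
    (hq : 0 < q) (hqp : q < p) (hp : p < 1)
    (hkN : ∀ N, k N ≤ N)
    (hlim : Tendsto (fun N : ℕ => (k N : ℝ) / N) atTop (nhds q)) :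
    Tendsto (fun N : ℕ => -(1 / (N : ℝ)) * Real.log (binTail p (k N) N)) atTop
      (nhds (relent q p)) := by
  have hp0 : 0 < p := lt_trans hq hqp
  set g : ℝ → ℝ := fun x => x * Real.log (x/p) + (1-x) * Real.log ((1-x)/(1-p)) with hg
  -- continuity of g at q
  have hq1 : q < 1 := lt_trans hqp hp
  have hcont : ContinuousAt g q := by
    have c1 : ContinuousAt (fun x : ℝ => Real.log (x/p)) q := by
      apply (Real.continuousAt_log (by positivity)).comp
      exact continuousAt_id.div_const p
    have c2 : ContinuousAt (fun x : ℝ => Real.log ((1-x)/(1-p))) q := by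
      apply ContinuousAt.comp (Real.continuousAt_log ?_)
      · exact (continuousAt_const.sub continuousAt_id).div_const _
      · have : (0:ℝ) < 1 - q := by linarith
        have : (0:ℝ) < 1 - p := by linarith
        positivity
    exact (continuousAt_id.mul c1).add ((continuousAt_const.sub continuousAt_id).mul c2)
  have hF : Tendsto (fun N : ℕ => g ((k N : ℝ)/N)) atTop (nhds (relent q p)) := by
    have := hcont.tendsto.comp hlim
    simpa [relent, hg, Function.comp_def] using this
  -- difference tends to 0
  have hdiff : Tendsto (fun N : ℕ =>
      (-(1 / (N : ℝ)) * Real.log (binTail p (k N) N)) - g ((k N : ℝ)/N)) atTop (nhds 0) := by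
    apply squeeze_zero_norm' _ log_ratio_tendsto
    have e1 : ∀ᶠ N : ℕ in atTop, q/2 < (k N : ℝ)/N :=
      hlim.eventually (eventually_gt_nhds (by linarith))
    have e2 : ∀ᶠ N : ℕ in atTop, (k N : ℝ)/N < (q+p)/2 :=
      hlim.eventually (eventually_lt_nhds (by linarith))
    filter_upwards [e1, e2, eventually_ge_atTop 1] with N h1 h2 hN1
    have hN : (0:ℝ) < N := by
      have : (0:ℕ) < N := hN1
      exact_mod_cast this
    have hk1 : 1 ≤ k N := by
      by_contra h
      have : k N = 0 := by omega
      rw [this] at h1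
      simp at h1
      linarith
    have hkNlt : k N < N := by
      have : (k N : ℝ) < ((q+p)/2) * N := (div_lt_iff₀ hN).mp h2
      have h3 : (k N : ℝ) < N := by nlinarith
      exact_mod_cast h3
    have hkp : (k N : ℝ) ≤ ((N:ℝ)+1)*p := by
      have : (k N : ℝ) < ((q+p)/2) * N := (div_lt_iff₀ hN).mp h2
      nlinarith
    have := main_bounds hp0 hp hk1 hkNlt hkp
    simpa [hg] using this
  have := hdiff.add hF
  rw [zero_add] at this
  apply this.congr
  intro N
  ring
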